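/- For any isometry V from R₁ to R₂ (a matrix with V†V = 1_{R₁}) and any belief β (a density matrix on S⊗R₁), the beliefs β and (1_S⊗V) β (1_S⊗V)† (a density matrix on S⊗R₂) are equivalent. -/

import Mathlib

open Matrix
open scoped Kronecker ComplexOrder


open Classical in
/-- The positive semidefinite square root of a matrix (zero if not PSD). -/
noncomputable def msqrt {n : Type*} [Fintype n] [DecidableEq n] (A : Matrix n n ℂ) :
    Matrix n n ℂ :=
  if h : A.PosSemidef then
    (h.1.eigenvectorUnitary : Matrix n n ℂ) *
      diagonal (fun i => ((Real.sqrt (h.1.eigenvalues i) : ℝ) : ℂ)) *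
      (star h.1.eigenvectorUnitary : Matrix n n ℂ)
  else 0

/-- `A^{-1/2}`: the (nonsingular) inverse of the PSD square root. -/
noncomputable def invsqrt {n : Type*} [Fintype n] [DecidableEq n] (A : Matrix n n ℂ) :
    Matrix n n ℂ :=
  (msqrt A)⁻¹

/-- Partial trace over the second factor `R`. -/
noncomputable def ptraceR {S R : Type*} [Fintype R] (M : Matrix (S × R) (S × R) ℂ) : Matrix S S ℂ :=
  Matrix.of fun s s' => ∑ r, M (s, r) (s', r)

/-- A density matrix: positive semidefinite with unit trace. -/
def IsDensity {n : Type*} [Fintype n] (A : Matrix n n ℂ) : Prop :=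
  A.PosSemidef ∧ A.trace = 1

/-- The Choi matrix of a linear map between matrix algebras. -/
def choi {S T : Type*} [Fintype S] [DecidableEq S]
    (E : Matrix S S ℂ →ₗ[ℂ] Matrix T T ℂ) : Matrix (S × T) (S × T) ℂ :=
  Matrix.of fun p q => E (Matrix.single p.1 q.1 1) p.2 q.2

/-- Completely positive trace-preserving map. -/
def IsCPTP {S T : Type*} [Fintype S] [DecidableEq S] [Fintype T]
    (E : Matrix S S ℂ →ₗ[ℂ] Matrix T T ℂ) : Prop :=
  (∀ X, (E X).trace = X.trace) ∧ (choi E).PosSemidef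

/-- The Hilbert-Schmidt adjoint `E†`, satisfying `Tr[E(X)† Y] = Tr[X† E†(Y)]`. -/
noncomputable def adjMap {S T : Type*} [Fintype S] [DecidableEq S] [Fintype T]
    (E : Matrix S S ℂ →ₗ[ℂ] Matrix T T ℂ) (Y : Matrix T T ℂ) : Matrix S S ℂ :=
  Matrix.of fun i j => ((E (Matrix.single i j 1))ᴴ * Y).trace

/-- The original Petz map `R^{E,βS}(σ) = √βS E†(E(βS)^{-1/2} σ E(βS)^{-1/2}) √βS`. -/
noncomputable def petz {S T : Type*} [Fintype S] [DecidableEq S] [Fintype T] [DecidableEq T]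
    (E : Matrix S S ℂ →ₗ[ℂ] Matrix T T ℂ) (βS : Matrix S S ℂ) (σ : Matrix T T ℂ) :
    Matrix S S ℂ :=
  msqrt βS * adjMap E (invsqrt (E βS) * σ * invsqrt (E βS)) * msqrt βS

/-- The prior-extended Petz map `R^{E⊗Tr,β}`. -/
noncomputable def petzExt {S R T : Type*} [Fintype S] [DecidableEq S]
    [Fintype R] [DecidableEq R] [Fintype T] [DecidableEq T]
    (E : Matrix S S ℂ →ₗ[ℂ] Matrix T T ℂ) (β : Matrix (S × R) (S × R) ℂ)
    (σ : Matrix T T ℂ) : Matrix (S × R) (S × R) ℂ :=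
  msqrt β *
    (adjMap E (invsqrt (E (ptraceR β)) * σ * invsqrt (E (ptraceR β))) ⊗ₖ (1 : Matrix R R ℂ)) *
    msqrt β

/-- The retrodiction map `R_ext^{E,β} = Tr_R ∘ R^{E⊗Tr,β}`. -/
noncomputable def retroExt {S R T : Type*} [Fintype S] [DecidableEq S]
    [Fintype R] [DecidableEq R] [Fintype T] [DecidableEq T]
    (E : Matrix S S ℂ →ₗ[ℂ] Matrix T T ℂ) (β : Matrix (S × R) (S × R) ℂ)
    (σ : Matrix T T ℂ) : Matrix S S ℂ :=
  ptraceR (petzExt E β σ)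

/-- Two beliefs are equivalent if they induce the same retrodiction map for all channels. -/
def EquivBeliefs {S R₁ R₂ : Type*} [Fintype S] [DecidableEq S]
    [Fintype R₁] [DecidableEq R₁] [Fintype R₂] [DecidableEq R₂]
    (β : Matrix (S × R₁) (S × R₁) ℂ) (γ : Matrix (S × R₂) (S × R₂) ℂ) : Prop :=
  ∀ (T : Type) (_ : Fintype T) (_ : DecidableEq T)
    (E : Matrix S S ℂ →ₗ[ℂ] Matrix T T ℂ),
    IsCPTP E → (E (ptraceR β)).PosDef → (E (ptraceR γ)).PosDef →
    ∀ σ : Matrix T T ℂ, retroExt E β σ = retroExt E γ σ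


open scoped MatrixOrder in
lemma msqrt_eq_cfc {n : Type*} [Fintype n] [DecidableEq n] {A : Matrix n n ℂ}
    (hA : A.PosSemidef) : msqrt A = CFC.sqrt A := by
  rw [CFC.sqrt_eq_cfc, cfc_nnreal_eq_real _ A hA.nonneg, hA.1.cfc_eq, msqrt, dif_pos hA]
  simp [IsHermitian.cfc, Function.comp_def, Real.coe_sqrt, Real.coe_toNNReal',
    max_eq_left (hA.eigenvalues_nonneg _), Unitary.conjStarAlgAut_apply]

open scoped MatrixOrder in
lemma msqrt_posSemidef {n : Type*} [Fintype n] [DecidableEq n] {A : Matrix n n ℂ}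
    (hA : A.PosSemidef) : (msqrt A).PosSemidef := by
  rw [msqrt_eq_cfc hA]; exact (CFC.sqrt_nonneg A).posSemidef

open scoped MatrixOrder in
lemma msqrt_mul_self {n : Type*} [Fintype n] [DecidableEq n] {A : Matrix n n ℂ}
    (hA : A.PosSemidef) : msqrt A * msqrt A = A := by
  rw [msqrt_eq_cfc hA]; exact CFC.sqrt_mul_sqrt_self A hA.nonneg

open scoped MatrixOrder in
lemma eq_msqrt_of_sq_eq {n : Type*} [Fintype n] [DecidableEq n] {A B : Matrix n n ℂ}
    (hA : A.PosSemidef) (hB : B.PosSemidef) (h : A ^ 2 = B) : A = msqrt B := by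
  rw [msqrt_eq_cfc hB, eq_comm, CFC.sqrt_eq_iff B A hB.nonneg hA.nonneg, ← h, pow_two]

lemma kron_conjT {S m n : Type*} [Fintype S] [Fintype m] [Fintype n]
    (A : Matrix S S ℂ) (B : Matrix m n ℂ) : (A ⊗ₖ B)ᴴ = Aᴴ ⊗ₖ Bᴴ := by
  ext ⟨i, j⟩ ⟨k, l⟩
  simp [Matrix.conjTranspose_apply, Matrix.kroneckerMap_apply, _root_.map_mul]

lemma ptraceR_conj {S R₁ R₂ : Type*} [Fintype S] [Fintype R₁] [Fintype R₂] [DecidableEq S]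
    [DecidableEq R₁] (V : Matrix R₂ R₁ ℂ) (hV : Vᴴ * V = 1)
    (M : Matrix (S × R₁) (S × R₁) ℂ) :
    ptraceR (((1 : Matrix S S ℂ) ⊗ₖ V) * M * ((1 : Matrix S S ℂ) ⊗ₖ V)ᴴ) = ptraceR M := by
  ext s s'
  have key : ∀ r r' : R₁, (∑ r₂, (starRingEnd ℂ) (V r₂ r') * V r₂ r) = if r' = r then 1 else 0 := by
    intro r r'
    have := congrFun (congrFun hV r') r
    simpa [Matrix.mul_apply, Matrix.conjTranspose_apply, Matrix.one_apply] using this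
  simp only [ptraceR, Matrix.of_apply, Matrix.mul_apply, Matrix.conjTranspose_apply,
    Matrix.kroneckerMap_apply, Fintype.sum_prod_type, Matrix.one_apply,
    ite_mul, one_mul, zero_mul, mul_ite, mul_zero, mul_one, apply_ite star, star_zero,
    Finset.sum_ite_eq, Finset.sum_ite_eq', Finset.mem_univ, if_true,
    Finset.sum_ite_irrel, Finset.sum_const_zero]
  rw [Finset.sum_comm]
  refine Finset.sum_congr rfl fun x1 _ => ?_
  have step : ∑ x : R₂, (∑ x2, V x x2 * M (s, x2) (s', x1)) * star (V x x1)
      = ∑ x2, (∑ x : R₂, star (V x x1) * V x x2) * M (s, x2) (s', x1) := by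
    simp_rw [Finset.sum_mul]
    rw [Finset.sum_comm]
    exact Finset.sum_congr rfl fun x2 _ => Finset.sum_congr rfl fun x _ => by ring
  rw [step]
  simp [key]

lemma msqrt_conj {n m : Type*} [Fintype n] [DecidableEq n] [Fintype m] [DecidableEq m]
    {β : Matrix n n ℂ} (hβ : β.PosSemidef) (W : Matrix m n ℂ) (hW : Wᴴ * W = 1) :
    msqrt (W * β * Wᴴ) = W * msqrt β * Wᴴ := by
  have hγ : (W * β * Wᴴ).PosSemidef := hβ.mul_mul_conjTranspose_same W
  have hs := msqrt_posSemidef hβ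
  have hps : (W * msqrt β * Wᴴ).PosSemidef := hs.mul_mul_conjTranspose_same W
  have hsq : (W * msqrt β * Wᴴ) ^ 2 = W * β * Wᴴ := by
    rw [pow_two]
    have h1 : W * msqrt β * Wᴴ * (W * msqrt β * Wᴴ)
        = W * msqrt β * (Wᴴ * W) * (msqrt β * Wᴴ) := by
      simp only [Matrix.mul_assoc]
    rw [h1, hW, Matrix.mul_one, Matrix.mul_assoc W, ← Matrix.mul_assoc (msqrt β),
      msqrt_mul_self hβ, ← Matrix.mul_assoc]
  have huniq := eq_msqrt_of_sq_eq hps hγ hsq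
  rw [← huniq]

/-- A belief is equivalent to its image under a local isometry
`V : R₁ → R₂` on the reference system. -/
theorem local_isometry_equiv
    {S R₁ R₂ : Type*} [Fintype S] [DecidableEq S]
    [Fintype R₁] [DecidableEq R₁] [Fintype R₂] [DecidableEq R₂]
    (β : Matrix (S × R₁) (S × R₁) ℂ) (hβ : IsDensity β)
    (V : Matrix R₂ R₁ ℂ) (hV : Vᴴ * V = 1) :
    EquivBeliefs β
      (((1 : Matrix S S ℂ) ⊗ₖ V) * β * ((1 : Matrix S S ℂ) ⊗ₖ V)ᴴ) := by
  intro T _ _ E _ _ _ σ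
  set W := (1 : Matrix S S ℂ) ⊗ₖ V with hWdef
  have hWH : Wᴴ = (1 : Matrix S S ℂ) ⊗ₖ Vᴴ := by
    rw [hWdef, kron_conjT, Matrix.conjTranspose_one]
  have hWW : Wᴴ * W = 1 := by
    rw [hWH, hWdef, ← Matrix.mul_kronecker_mul, Matrix.one_mul, hV, Matrix.one_kronecker_one]
  have hpt : ptraceR (W * β * Wᴴ) = ptraceR β := ptraceR_conj V hV β
  unfold retroExt petzExt
  rw [hpt]
  set A := adjMap E (invsqrt (E (ptraceR β)) * σ * invsqrt (E (ptraceR β))) with hA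
  have hms : msqrt (W * β * Wᴴ) = W * msqrt β * Wᴴ := msqrt_conj hβ.1 W hWW
  rw [hms]
  have hmid : Wᴴ * (A ⊗ₖ (1 : Matrix R₂ R₂ ℂ)) * W = A ⊗ₖ (1 : Matrix R₁ R₁ ℂ) := by
    rw [hWH, hWdef, ← Matrix.mul_kronecker_mul, Matrix.one_mul, Matrix.mul_one,
      ← Matrix.mul_kronecker_mul, Matrix.mul_one, hV]
  have hassoc : W * msqrt β * Wᴴ * (A ⊗ₖ (1 : Matrix R₂ R₂ ℂ)) * (W * msqrt β * Wᴴ)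
      = W * (msqrt β * (A ⊗ₖ (1 : Matrix R₁ R₁ ℂ)) * msqrt β) * Wᴴ := by
    rw [← hmid]; simp only [Matrix.mul_assoc]
  rw [hassoc, ptraceR_conj V hV]
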